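/- Let d ∈ ℕ, r > 0, a ∈ ℝ^d with ‖a‖₂ = 1, let x be a Gaussian random vector in ℝ^d with distribution N(0, r²·Id), let w ∈ ℝ^d, and set c = ⟨a, w⟩ and c' = √(‖w‖₂² − c²). Then E[1 − sgn(⟨x, a⟩)·⟨x, w⟩]₊ = (1/(2π))·∫_{ℝ²} [1 − c r |t₁| − c' r t₂]₊·e^{−(t₁² + t₂²)/2} dt₁ dt₂. -/

import Mathlib

open MeasureTheory ProbabilityTheory Real

noncomputable section

open Set
open scoped ENNReal NNReal

/-- The centered Gaussian distribution `N(0, r²·Id)` on `ℝ^d`. -/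
def gaussVec (d : ℕ) (r : ℝ) : Measure (Fin d → ℝ) :=
  Measure.pi fun _ => gaussianReal 0 (Real.toNNReal (r ^ 2))

/-- Euclidean inner product on `Fin d → ℝ`. -/
def inn {d : ℕ} (v w : Fin d → ℝ) : ℝ := ∑ j, v j * w j

/-- ℓ²-norm on `Fin d → ℝ`. -/
def l2 {d : ℕ} (w : Fin d → ℝ) : ℝ := Real.sqrt (∑ j, (w j) ^ 2)

section Aux

lemma measurable_realSign : Measurable Real.sign := by
  unfold Real.sign
  exact Measurable.ite (measurableSet_lt measurable_id measurable_const) measurable_const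
    (Measurable.ite (measurableSet_lt measurable_const measurable_id) measurable_const
      measurable_const)

lemma sign_mul_self' (t : ℝ) : Real.sign t * t = |t| := by
  rcases lt_trichotomy t 0 with h | h | h
  · rw [Real.sign_of_neg h, abs_of_neg h]; ring
  · simp [h]
  · rw [Real.sign_of_pos h, abs_of_pos h]; ring

lemma prod_gaussianPDF_eq {d : ℕ} (v : ℝ≥0) (z : EuclideanSpace ℝ (Fin d)) :
    (∏ i, gaussianPDF 0 v (z i))
      = ENNReal.ofReal ((√(2 * π * v))⁻¹ ^ d * Real.exp (-‖z‖ ^ 2 / (2 * (v : ℝ)))) := by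
  have hnorm : ‖z‖ ^ 2 = ∑ i, (z i) ^ 2 := by
    rw [EuclideanSpace.norm_eq, Real.sq_sqrt (Finset.sum_nonneg fun i _ => sq_nonneg _)]
    simp [sq_abs]
  simp only [gaussianPDF]
  rw [← ENNReal.ofReal_prod_of_nonneg (fun i _ => gaussianPDFReal_nonneg 0 v (z i))]
  congr 1
  simp only [gaussianPDFReal, sub_zero]
  rw [Finset.prod_mul_distrib, Finset.prod_const, ← Real.exp_sum, hnorm]
  congr 2
  · simp
  · rw [← Finset.sum_div, neg_div, Finset.sum_neg_distrib]
    exact neg_div _ _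

lemma lintegral_pi_prod {n : ℕ} (μ : Measure ℝ) [SigmaFinite μ] (f : Fin n → ℝ → ℝ≥0∞)
    (hf : ∀ i, Measurable (f i)) :
    ∫⁻ x : Fin n → ℝ, ∏ i, f i (x i) ∂(Measure.pi fun _ => μ) = ∏ i, ∫⁻ t, f i t ∂μ := by
  induction n with
  | zero => simp
  | succ n ih =>
    have h := (measurePreserving_piFinSuccAbove (fun _ : Fin (n+1) => μ) 0).symm
    have hF : Measurable fun x : Fin (n+1) → ℝ => ∏ i, f i (x i) :=
      Finset.measurable_prod _ fun i _ => (hf i).comp (measurable_pi_apply i)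
    rw [← h.lintegral_comp hF]
    simp only [MeasurableEquiv.piFinSuccAbove_symm_apply, Fin.insertNthEquiv,
      Equiv.coe_fn_mk, Fin.insertNth_zero, Fin.prod_univ_succ, Fin.zero_succAbove, cast_eq,
      Fin.cons_zero, Fin.cons_succ]
    rw [lintegral_prod_mul (f := f 0) (g := fun y : Fin n → ℝ => ∏ i, f i.succ (y i))
      (hf 0).aemeasurable
      (Finset.measurable_prod _ fun i _ => (hf i.succ).comp (measurable_pi_apply i)).aemeasurable]
    rw [ih (fun i => f i.succ) (fun i => hf i.succ)]

lemma pi_withDensity {n : ℕ} (μ : Measure ℝ) [SigmaFinite μ] (f : ℝ → ℝ≥0∞)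
    (hf : Measurable f) (hμ : μ = (volume : Measure ℝ).withDensity f) :
    (Measure.pi fun _ : Fin n => μ)
      = (volume : Measure (Fin n → ℝ)).withDensity fun x => ∏ i, f (x i) := by
  refine Measure.pi_eq fun s hs => ?_
  simp_rw [hμ]
  rw [withDensity_apply _ (MeasurableSet.univ_pi hs),
    ← lintegral_indicator (μ := (volume : Measure (Fin n → ℝ)))
      (MeasurableSet.univ_pi hs) (fun x => ∏ i, f (x i))]
  have hind : (univ.pi s).indicator (fun x : Fin n → ℝ => ∏ i, f (x i))
      = fun x : Fin n → ℝ => ∏ i, (s i).indicator f (x i) := by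
    funext x
    by_cases hx : x ∈ univ.pi s
    · rw [indicator_of_mem hx]
      exact Finset.prod_congr rfl fun i _ => (indicator_of_mem (hx i (Set.mem_univ i)) f).symm
    · rw [indicator_of_notMem hx]
      rw [Set.mem_univ_pi] at hx; push_neg at hx
      obtain ⟨i, hi⟩ := hx
      exact (Finset.prod_eq_zero (Finset.mem_univ i) (by simp [indicator_of_notMem hi])).symm
  rw [hind, volume_pi, lintegral_pi_prod _ _ (fun i => hf.indicator (hs i))]
  exact (Finset.prod_congr rfl fun i _ => by
    rw [withDensity_apply _ (hs i),
      ← lintegral_indicator (μ := (volume : Measure ℝ)) (hs i) f]).symm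

lemma map_withDensity_equiv {α β : Type*} [MeasurableSpace α] [MeasurableSpace β]
    (φ : α ≃ᵐ β) (μ : Measure α) (f : α → ℝ≥0∞) (hf : Measurable f) :
    Measure.map φ (μ.withDensity f) = (Measure.map φ μ).withDensity (fun y => f (φ.symm y)) := by
  ext s hs
  rw [Measure.map_apply φ.measurable hs, withDensity_apply _ hs,
    withDensity_apply _ (φ.measurable hs),
    setLIntegral_map (f := fun y => f (φ.symm y)) hs (hf.comp φ.symm.measurable) φ.measurable]
  simp

lemma map_pair_pi {ι : Type*} [Fintype ι] [DecidableEq ι] (μ : Measure ℝ)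
    [IsProbabilityMeasure μ] {i j : ι} (hij : i ≠ j) :
    Measure.map (fun y : ι → ℝ => (y i, y j)) (Measure.pi fun _ => μ) = μ.prod μ := by
  refine (Measure.prod_eq fun s t hs ht => ?_).symm
  rw [Measure.map_apply ((measurable_pi_apply i).prodMk (measurable_pi_apply j)) (hs.prod ht)]
  have hpre : (fun y : ι → ℝ => (y i, y j)) ⁻¹' (s ×ˢ t)
      = univ.pi (fun k => if k = i then s else if k = j then t else univ) := by
    ext y
    simp only [Set.mem_preimage, Set.mem_prod, Set.mem_univ_pi]
    constructor
    · rintro ⟨h1, h2⟩ k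
      by_cases hk : k = i
      · subst hk; simp [h1]
      · by_cases hk' : k = j
        · subst hk'; simp [hk, h2]
        · simp [hk, hk']
    · intro h
      constructor
      · have := h i; simpa using this
      · have := h j; simpa [Ne.symm hij] using this
  rw [hpre, Measure.pi_pi]
  rw [show (Finset.univ : Finset ι) = insert i (Finset.univ.erase i) by
    rw [Finset.insert_erase (Finset.mem_univ i)]]
  rw [Finset.prod_insert (Finset.notMem_erase i _)]
  have hj' : j ∈ Finset.univ.erase i := Finset.mem_erase.2 ⟨Ne.symm hij, Finset.mem_univ j⟩
  rw [show Finset.univ.erase i = insert j ((Finset.univ.erase i).erase j) by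
    rw [Finset.insert_erase hj']]
  rw [Finset.prod_insert (Finset.notMem_erase j _)]
  have h1 : (if i = i then s else if i = j then t else univ) = s := by simp
  have h2 : (if j = i then s else if j = j then t else univ) = t := by simp [Ne.symm hij]
  rw [h1, h2]
  have h3 : ∀ k ∈ (Finset.univ.erase i).erase j,
      μ (if k = i then s else if k = j then t else univ) = 1 := by
    intro k hk
    rw [Finset.mem_erase, Finset.mem_erase] at hk
    simp [hk.1, hk.2.1, measure_univ]
  rw [Finset.prod_congr rfl h3]
  simp

lemma gaussVec_eq_withDensity (d : ℕ) {r : ℝ} (hr : 0 < r) :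
    gaussVec d r = (volume : Measure (Fin d → ℝ)).withDensity
      (fun x => ∏ i, gaussianPDF 0 (Real.toNNReal (r ^ 2)) (x i)) := by
  have hv : Real.toNNReal (r ^ 2) ≠ 0 := by
    rw [ne_eq, Real.toNNReal_eq_zero, not_le]
    positivity
  rw [gaussVec]
  exact pi_withDensity _ _ (measurable_gaussianPDF _ _) (gaussianReal_of_var_ne_zero 0 hv)

lemma gaussVec_map_iso {d : ℕ} {r : ℝ} (hr : 0 < r)
    (e : EuclideanSpace ℝ (Fin d) ≃ₗᵢ[ℝ] EuclideanSpace ℝ (Fin d)) :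
    Measure.map (fun x : Fin d → ℝ =>
        ((MeasurableEquiv.toLp 2 (Fin d → ℝ)).symm)
          (e (((MeasurableEquiv.toLp 2 (Fin d → ℝ)).symm).symm x)))
      (gaussVec d r) = gaussVec d r := by
  set v := Real.toNNReal (r ^ 2) with hvdef
  set ψ := (MeasurableEquiv.toLp 2 (Fin d → ℝ)).symm with hψ
  set Φ : (Fin d → ℝ) ≃ᵐ (Fin d → ℝ) :=
    (ψ.symm.trans e.toHomeomorph.toMeasurableEquiv).trans ψ with hΦ
  have hmap : (fun x : Fin d → ℝ => ψ (e (ψ.symm x))) = ⇑Φ := rfl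
  have hρm : Measurable fun x : Fin d → ℝ => ∏ i, gaussianPDF 0 v (x i) :=
    Finset.measurable_prod _ fun i _ =>
      (measurable_gaussianPDF _ _).comp (measurable_pi_apply i)
  rw [hmap, gaussVec_eq_withDensity d hr, map_withDensity_equiv Φ _ _ hρm]
  have hvol : Measure.map (⇑Φ) (volume : Measure (Fin d → ℝ)) = volume := by
    have h1 : MeasurePreserving (⇑Φ) volume volume := by
      have he : MeasurePreserving (⇑e)
          (volume : Measure (EuclideanSpace ℝ (Fin d))) volume :=
        e.measurePreserving
      exact ((EuclideanSpace.volume_preserving_symm_measurableEquiv_toLp (Fin d)).comp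
        (he.comp (EuclideanSpace.volume_preserving_symm_measurableEquiv_toLp (Fin d)).symm))
    exact h1.map_eq
  rw [hvol]
  congr 1
  funext y
  have hΦsymm : Φ.symm y = ψ (e.symm (ψ.symm y)) := rfl
  rw [hΦsymm]
  have key : ∀ u : EuclideanSpace ℝ (Fin d),
      (∏ i, gaussianPDF 0 v ((ψ u) i))
        = ENNReal.ofReal ((√(2 * π * (v:ℝ)))⁻¹ ^ d * Real.exp (-‖u‖ ^ 2 / (2 * (v : ℝ)))) :=
    fun u => prod_gaussianPDF_eq v u
  rw [key (e.symm (ψ.symm y))]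
  have := key (ψ.symm y)
  have hy : (∏ i, gaussianPDF 0 v (y i))
      = ENNReal.ofReal ((√(2 * π * (v:ℝ)))⁻¹ ^ d
          * Real.exp (-‖(ψ.symm y : EuclideanSpace ℝ (Fin d))‖ ^ 2 / (2 * (v : ℝ)))) := this
  rw [hy, LinearIsometryEquiv.norm_map]

lemma gaussianReal_map_neg {v : ℝ≥0} :
    Measure.map (fun y : ℝ => -y) (gaussianReal 0 v) = gaussianReal 0 v := by
  have h := gaussianReal_map_const_mul (μ := 0) (v := v) (-1)
  have h1 : (fun y : ℝ => -1 * y) = fun y : ℝ => -y := by funext y; ring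
  have h2 : (⟨(-1 : ℝ) ^ 2, sq_nonneg _⟩ : ℝ≥0) = 1 := by ext; norm_num
  rw [h1] at h
  rw [h]
  norm_num [h2]

lemma sign_flip_preserving {v : ℝ≥0} (hv : v ≠ 0) :
    MeasurePreserving (fun p : ℝ × ℝ => (p.1, if p.1 < 0 then -p.2 else p.2))
      ((gaussianReal 0 v).prod (gaussianReal 0 v))
      ((gaussianReal 0 v).prod (gaussianReal 0 v)) := by
  refine MeasurePreserving.skew_product (g := fun x y => if x < 0 then -y else y)
    (MeasurePreserving.id _) ?_ ?_
  · exact Measurable.ite (measurableSet_lt measurable_fst measurable_const)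
      measurable_snd.neg measurable_snd
  · refine Filter.Eventually.of_forall fun x => ?_
    by_cases hx : x < 0
    · simp only [if_pos hx]
      exact gaussianReal_map_neg
    · simp only [if_neg hx]
      exact Measure.map_id

lemma gaussian_prod_withDensity :
    (gaussianReal 0 1).prod (gaussianReal 0 1)
      = ((volume : Measure ℝ).prod volume).withDensity
          (fun p => gaussianPDF 0 1 p.1 * gaussianPDF 0 1 p.2) := by
  refine Measure.prod_eq fun s t hs ht => ?_
  rw [withDensity_apply _ (hs.prod ht), ← Measure.prod_restrict,
    lintegral_prod_mul ((measurable_gaussianPDF 0 1).aemeasurable)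
      ((measurable_gaussianPDF 0 1).aemeasurable),
    gaussianReal_of_var_ne_zero 0 one_ne_zero, withDensity_apply _ hs, withDensity_apply _ ht]

lemma integral_chain {r : ℝ} (hr : 0 < r) (c c' : ℝ) :
    (∫ q : ℝ × ℝ, max (1 - Real.sign q.1 * q.2) 0
        ∂(Measure.map (fun p : ℝ × ℝ => (p.1, c * p.1 + c' * p.2))
          ((gaussianReal 0 (Real.toNNReal (r ^ 2))).prod
            (gaussianReal 0 (Real.toNNReal (r ^ 2))))))
      = (1 / (2 * π)) * ∫ p : ℝ × ℝ,
          max (1 - c * r * |p.1| - c' * r * p.2) 0 * Real.exp (-(p.1 ^ 2 + p.2 ^ 2) / 2) := by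
  set v := Real.toNNReal (r ^ 2) with hv
  have hv0 : v ≠ 0 := by rw [hv, ne_eq, Real.toNNReal_eq_zero, not_le]; positivity
  set g := gaussianReal 0 v with hgdef
  set N := gaussianReal 0 1 with hNdef
  set T : ℝ × ℝ → ℝ × ℝ := fun p => (p.1, if p.1 < 0 then -p.2 else p.2) with hT
  set F0 : ℝ × ℝ → ℝ := fun p => max (1 - c * |p.1| - c' * p.2) 0 with hF0
  set F : ℝ × ℝ → ℝ := fun p => max (1 - c * r * |p.1| - c' * r * p.2) 0 with hFdef
  have hF0m : Measurable F0 :=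
    ((measurable_const.sub (measurable_fst.abs.const_mul c)).sub
      (measurable_snd.const_mul c')).max measurable_const
  have hFm : Measurable F :=
    ((measurable_const.sub (measurable_fst.abs.const_mul (c * r))).sub
      (measurable_snd.const_mul (c' * r))).max measurable_const |>.mono le_rfl le_rfl
  have hφm : Measurable fun p : ℝ × ℝ => (p.1, c * p.1 + c' * p.2) :=
    measurable_fst.prodMk ((measurable_fst.const_mul c).add (measurable_snd.const_mul c'))
  have hGm : Measurable fun q : ℝ × ℝ => max (1 - Real.sign q.1 * q.2) 0 :=
    (measurable_const.sub ((measurable_realSign.comp measurable_fst).mul measurable_snd)).max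
      measurable_const
  rw [integral_map hφm.aemeasurable hGm.aestronglyMeasurable]
  have hTpres := sign_flip_preserving (v := v) hv0
  have hnull : (g.prod g) {p : ℝ × ℝ | p.1 = 0} = 0 := by
    have hset : {p : ℝ × ℝ | p.1 = 0} = ({0} : Set ℝ) ×ˢ (univ : Set ℝ) := by
      ext p
      simp only [Set.mem_setOf_eq, Set.mem_prod, Set.mem_singleton_iff, Set.mem_univ, and_true]
    rw [hset, Measure.prod_prod]
    have hg0 : g {0} = 0 :=
      gaussianReal_absolutelyContinuous 0 hv0 Real.volume_singleton
    simp [hg0]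
  have hae : ∀ᵐ p : ℝ × ℝ ∂(g.prod g), p.1 ≠ 0 := by
    rw [ae_iff]
    have hs2 : {p : ℝ × ℝ | ¬ p.1 ≠ 0} = {p : ℝ × ℝ | p.1 = 0} := by ext p; simp
    rw [hs2]; exact hnull
  have step2 : ∫ p : ℝ × ℝ, max (1 - Real.sign p.1 * (c * p.1 + c' * p.2)) 0 ∂(g.prod g)
      = ∫ p, F0 (T p) ∂(g.prod g) := by
    refine integral_congr_ae ?_
    filter_upwards [hae] with p hp
    have hsgn : Real.sign p.1 * (c * p.1 + c' * p.2)
        = c * |p.1| + c' * (Real.sign p.1 * p.2) := by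
      rw [← sign_mul_self' p.1]; ring
    rcases hp.lt_or_gt with h | h
    · simp only [hF0, hT, if_pos h, hsgn, Real.sign_of_neg h]
      rw [abs_of_neg h]; ring_nf
    · simp only [hF0, hT, if_neg (not_lt.mpr h.le), hsgn, Real.sign_of_pos h]
      rw [abs_of_pos h]; ring_nf
  rw [step2]
  have step3 : ∫ p, F0 (T p) ∂(g.prod g) = ∫ p, F0 p ∂(g.prod g) := by
    conv_rhs => rw [← hTpres.map_eq]
    rw [integral_map hTpres.aemeasurable hF0m.aestronglyMeasurable]
  rw [step3]
  have hscale : Measure.map (fun t : ℝ => r * t) N = g := by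
    rw [hNdef, gaussianReal_map_const_mul r, mul_zero, mul_one]
    rw [hgdef]; congr 1
    ext
    simp [hv, Real.coe_toNNReal _ (sq_nonneg r)]
  have hP : MeasurePreserving (Prod.map (fun t : ℝ => r * t) (fun t : ℝ => r * t))
      (N.prod N) (g.prod g) :=
    MeasurePreserving.prod ⟨measurable_id.const_mul r, hscale⟩
      ⟨measurable_id.const_mul r, hscale⟩
  rw [← hP.map_eq, integral_map hP.aemeasurable hF0m.aestronglyMeasurable]
  have step4 : ∫ p, F0 (Prod.map (fun t : ℝ => r * t) (fun t : ℝ => r * t) p) ∂(N.prod N)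
      = ∫ p, F p ∂(N.prod N) := by
    refine integral_congr_ae (Filter.Eventually.of_forall fun p => ?_)
    simp only [hF0, hFdef, Prod.map, abs_mul, abs_of_pos hr]
    ring_nf
  rw [step4, hNdef, gaussian_prod_withDensity]
  have hq : Measurable fun p : ℝ × ℝ =>
      (gaussianPDFReal 0 1 p.1).toNNReal * (gaussianPDFReal 0 1 p.2).toNNReal :=
    (((measurable_gaussianPDFReal 0 1).comp measurable_fst).real_toNNReal).mul
      (((measurable_gaussianPDFReal 0 1).comp measurable_snd).real_toNNReal)
  have hcoe : (fun p : ℝ × ℝ => gaussianPDF 0 1 p.1 * gaussianPDF 0 1 p.2)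
      = fun p : ℝ × ℝ => (((gaussianPDFReal 0 1 p.1).toNNReal
          * (gaussianPDFReal 0 1 p.2).toNNReal : ℝ≥0) : ℝ≥0∞) := by
    funext p
    rw [ENNReal.coe_mul]
    rfl
  rw [hcoe, integral_withDensity_eq_integral_smul hq, ← Measure.volume_eq_prod,
    ← integral_const_mul]
  refine integral_congr_ae (Filter.Eventually.of_forall fun p => ?_)
  have hpdf : ∀ t : ℝ, gaussianPDFReal 0 1 t = (√(2*π))⁻¹ * rexp (-t^2/2) := by
    intro t; simp [gaussianPDFReal]
  have hsq : (√(2*π))⁻¹ * (√(2*π))⁻¹ = 1/(2*π) := by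
    rw [← mul_inv, Real.mul_self_sqrt (by positivity), one_div]
  have hexp : rexp (-p.1^2/2) * rexp (-p.2^2/2) = rexp (-(p.1^2+p.2^2)/2) := by
    rw [← Real.exp_add]; ring_nf
  have c1 : (((√(2*π))⁻¹ * rexp (-p.1^2/2)).toNNReal : ℝ) = (√(2*π))⁻¹ * rexp (-p.1^2/2) :=
    Real.coe_toNNReal _ (by positivity)
  have c2 : (((√(2*π))⁻¹ * rexp (-p.2^2/2)).toNNReal : ℝ) = (√(2*π))⁻¹ * rexp (-p.2^2/2) :=
    Real.coe_toNNReal _ (by positivity)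
  simp only [hFdef, NNReal.smul_def, smul_eq_mul, NNReal.coe_mul, c1, c2, hpdf]
  rw [← hexp]
  linear_combination
    (rexp (-p.1^2/2) * rexp (-p.2^2/2) * ((1 - c * r * |p.1| - c' * r * p.2) ⊔ 0)) * hsq


lemma inn_comm {d : ℕ} (u x : Fin d → ℝ) : inn u x = inn x u := by
  unfold inn
  exact Finset.sum_congr rfl fun j _ => mul_comm _ _

lemma key_map_one {r : ℝ} (hr : 0 < r) (a w : Fin 1 → ℝ) (ha : l2 a = 1)
    (c c' : ℝ) (hc : c = inn a w) (hc' : c' = Real.sqrt ((l2 w) ^ 2 - c ^ 2)) :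
    Measure.map (fun x : Fin 1 → ℝ => (inn x a, inn x w)) (gaussVec 1 r)
      = Measure.map (fun p : ℝ × ℝ => (p.1, c * p.1 + c' * p.2))
          ((gaussianReal 0 (Real.toNNReal (r ^ 2))).prod
            (gaussianReal 0 (Real.toNNReal (r ^ 2)))) := by
  set v := Real.toNNReal (r ^ 2) with hv
  set g := gaussianReal 0 v with hgdef
  have ha2 : a 0 ^ 2 = 1 := by
    have hs : Real.sqrt (a 0 ^ 2) = 1 := by simpa [l2] using ha
    nlinarith [Real.sq_sqrt (sq_nonneg (a 0)), hs]
  have hcval : c = a 0 * w 0 := by simpa [inn] using hc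
  have hw0 : w 0 = c * a 0 := by linear_combination (-(a 0)) * hcval - w 0 * ha2
  have hc'0 : c' = 0 := by
    have hl2w : (l2 w) ^ 2 = (w 0) ^ 2 := by
      rw [l2, Fin.sum_univ_one, Real.sq_sqrt (sq_nonneg _)]
    have hz : (l2 w) ^ 2 - c ^ 2 = 0 := by
      rw [hl2w]
      linear_combination (w 0 + c * a 0) * hw0 + c^2 * ha2
    rw [hc', hz, Real.sqrt_zero]
  have m1 : Measurable fun x : Fin 1 → ℝ => x 0 := measurable_pi_apply 0
  have m2 : Measurable fun t : ℝ => t * a 0 := measurable_mul_const _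
  have m3 : Measurable fun u : ℝ => (u, c * u) :=
    measurable_id.prodMk (measurable_id.const_mul c)
  have hfun : (fun x : Fin 1 → ℝ => (inn x a, inn x w))
      = (fun u : ℝ => (u, c * u)) ∘ ((fun t : ℝ => t * a 0) ∘ (fun x : Fin 1 → ℝ => x 0)) := by
    funext x
    have hsnd : x 0 * w 0 = c * (x 0 * a 0) := by rw [hw0]; ring
    simp only [Function.comp_apply, inn, Fin.sum_univ_one, hsnd]
  have h0 : Measure.map (fun x : Fin 1 → ℝ => x 0) (gaussVec 1 r) = g := by
    have hco : (fun x : Fin 1 → ℝ => x 0) = ⇑(MeasurableEquiv.funUnique (Fin 1) ℝ) := by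
      funext x; exact congrArg x (Subsingleton.elim _ _)
    rw [hco]
    exact (measurePreserving_funUnique g (Fin 1)).map_eq
  have h1 : Measure.map (fun t : ℝ => t * a 0) g = g := by
    rw [hgdef, gaussianReal_map_mul_const (a 0), mul_zero]
    congr 1
    ext
    simp [ha2]
  have hLHS : Measure.map (fun x : Fin 1 → ℝ => (inn x a, inn x w)) (gaussVec 1 r)
      = Measure.map (fun u : ℝ => (u, c * u)) g := by
    rw [hfun, ← Measure.map_map m3 (m2.comp m1), ← Measure.map_map m2 m1, h0, h1]
  have hRHS : (fun p : ℝ × ℝ => (p.1, c * p.1 + c' * p.2))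
      = (fun u : ℝ => (u, c * u)) ∘ Prod.fst := by
    funext p
    simp [hc'0]
  rw [hLHS, hRHS, ← Measure.map_map m3 measurable_fst, Measure.map_fst_prod,
    measure_univ, one_smul]

lemma key_map {d : ℕ} (hd : 2 ≤ d) {r : ℝ} (hr : 0 < r) (a w : Fin d → ℝ) (ha : l2 a = 1)
    (c c' : ℝ) (hc : c = inn a w) (hc' : c' = Real.sqrt ((l2 w) ^ 2 - c ^ 2)) :
    Measure.map (fun x : Fin d → ℝ => (inn x a, inn x w)) (gaussVec d r)
      = Measure.map (fun p : ℝ × ℝ => (p.1, c * p.1 + c' * p.2))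
          ((gaussianReal 0 (Real.toNNReal (r ^ 2))).prod
            (gaussianReal 0 (Real.toNNReal (r ^ 2)))) := by
  classical
  set i0 : Fin d := ⟨0, by omega⟩ with hi0
  set i1 : Fin d := ⟨1, by omega⟩ with hi1
  have h01 : i0 ≠ i1 := by simp [hi0, hi1, Fin.ext_iff]
  set ψ := (MeasurableEquiv.toLp 2 (Fin d → ℝ)).symm with hψ
  set a' : EuclideanSpace ℝ (Fin d) := ψ.symm a with ha'
  set w' : EuclideanSpace ℝ (Fin d) := ψ.symm w with hw'
  have happ : ∀ (u : Fin d → ℝ) (i : Fin d), (ψ.symm u) i = u i := fun u i => rfl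
  have hinner : ∀ u x : Fin d → ℝ,
      (inner ℝ (ψ.symm u) (ψ.symm x) : ℝ) = inn u x := by
    intro u x
    simp only [PiLp.inner_apply, RCLike.inner_apply, conj_trivial, happ, inn]
    exact Finset.sum_congr rfl fun j _ => mul_comm _ _
  have hnorm : ∀ u : Fin d → ℝ, ‖(ψ.symm u : EuclideanSpace ℝ (Fin d))‖ = l2 u := by
    intro u
    rw [EuclideanSpace.norm_eq, l2]
    congr 1
    exact Finset.sum_congr rfl fun i _ => by rw [happ, Real.norm_eq_abs, sq_abs]
  have ha'norm : ‖a'‖ = 1 := by rw [ha', hnorm, ha]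
  have hip_aw : (inner ℝ a' w' : ℝ) = c := by rw [ha', hw', hinner]; exact hc.symm
  have hlw : l2 w = ‖w'‖ := (hnorm w).symm
  obtain ⟨b', hbnorm, hab, hwdec⟩ :
      ∃ b' : EuclideanSpace ℝ (Fin d), ‖b'‖ = 1 ∧ (inner ℝ a' b' : ℝ) = 0
        ∧ w' = c • a' + c' • b' := by
    by_cases hcase : w' - c • a' = 0
    · have hwca : w' = c • a' := by rwa [sub_eq_zero] at hcase
      have hc'0 : c' = 0 := by
        have : (l2 w) ^ 2 = c ^ 2 := by
          rw [hlw, hwca, norm_smul, ha'norm, mul_one, Real.norm_eq_abs, sq_abs]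
        rw [hc', this, sub_self, Real.sqrt_zero]
      have hext : Orthonormal ℝ (({i0} : Set (Fin d)).restrict (fun _ : Fin d => a')) := by
        constructor
        · intro i; exact ha'norm
        · intro i j hij
          have hi := i.2; have hj := j.2
          rw [Set.mem_singleton_iff] at hi hj
          exact absurd (Subtype.ext (hi.trans hj.symm)) hij
      obtain ⟨B₀, hB₀⟩ := hext.exists_orthonormalBasis_extension_of_card_eq (by simp)
      have hB₀0 : B₀ i0 = a' := hB₀ i0 rfl
      refine ⟨B₀ i1, B₀.orthonormal.1 i1, ?_, ?_⟩
      · rw [← hB₀0]; exact B₀.orthonormal.2 h01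
      · rw [hwca, hc'0, zero_smul, add_zero]
    · set u : EuclideanSpace ℝ (Fin d) := w' - c • a' with hu
      have hunz : ‖u‖ ≠ 0 := norm_ne_zero_iff.mpr hcase
      have hip_au : (inner ℝ a' u : ℝ) = 0 := by
        rw [hu, inner_sub_right, real_inner_smul_right, hip_aw,
          real_inner_self_eq_norm_sq, ha'norm]
        ring
      have hu_sq : ‖u‖ ^ 2 = (l2 w) ^ 2 - c ^ 2 := by
        rw [hu, norm_sub_sq_real, real_inner_smul_right, real_inner_comm, hip_aw,
          norm_smul, ha'norm, mul_one, Real.norm_eq_abs, sq_abs, hlw]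
        ring
      have hc'u : c' = ‖u‖ := by rw [hc', ← hu_sq, Real.sqrt_sq (norm_nonneg _)]
      refine ⟨‖u‖⁻¹ • u, ?_, ?_, ?_⟩
      · rw [norm_smul, Real.norm_eq_abs, abs_inv, abs_of_nonneg (norm_nonneg _),
          inv_mul_cancel₀ hunz]
      · rw [real_inner_smul_right, hip_au, mul_zero]
      · rw [smul_smul, hc'u, mul_inv_cancel₀ hunz, one_smul, hu, add_sub_cancel]
  set V : Fin d → EuclideanSpace ℝ (Fin d) := fun i => if i = i0 then a' else b' with hV
  have hVon : Orthonormal ℝ (({i0, i1} : Set (Fin d)).restrict V) := by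
    constructor
    · rintro ⟨i, hi⟩
      by_cases h : i = i0 <;> simp [Set.restrict, hV, h, ha'norm, hbnorm]
    · rintro ⟨i, hi⟩ ⟨j, hj⟩ hij
      have hij' : i ≠ j := fun h => hij (Subtype.ext h)
      simp only [Set.mem_insert_iff, Set.mem_singleton_iff] at hi hj
      rcases hi with rfl | rfl <;> rcases hj with rfl | rfl
      · exact absurd rfl hij'
      · simpa [Set.restrict, hV, Ne.symm h01] using hab
      · have hba : (inner ℝ b' a' : ℝ) = 0 := by rw [real_inner_comm]; exact hab
        simpa [Set.restrict, hV, Ne.symm h01] using hba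
      · exact absurd rfl hij'
  obtain ⟨B, hB⟩ := hVon.exists_orthonormalBasis_extension_of_card_eq (by simp)
  have hB0 : B i0 = a' := by
    have := hB i0 (by simp)
    simpa [hV] using this
  have hB1 : B i1 = b' := by
    have := hB i1 (by simp)
    simpa [hV, Ne.symm h01] using this
  set Φfun : (Fin d → ℝ) → (Fin d → ℝ) := fun x => ψ (B.repr (ψ.symm x)) with hΦfun
  have hΦm : Measurable Φfun :=
    ψ.measurable.comp (B.repr.continuous.measurable.comp ψ.symm.measurable)
  have hpairm : Measurable fun y : Fin d → ℝ => (y i0, y i1) :=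
    (measurable_pi_apply i0).prodMk (measurable_pi_apply i1)
  have hφm : Measurable fun p : ℝ × ℝ => (p.1, c * p.1 + c' * p.2) :=
    measurable_fst.prodMk ((measurable_fst.const_mul c).add (measurable_snd.const_mul c'))
  have hcomp : (fun x : Fin d → ℝ => (inn x a, inn x w))
      = ((fun p : ℝ × ℝ => (p.1, c * p.1 + c' * p.2))
          ∘ (fun y : Fin d → ℝ => (y i0, y i1))) ∘ Φfun := by
    funext x
    have h0 : (Φfun x) i0 = (inner ℝ a' (ψ.symm x) : ℝ) := by
      show (B.repr (ψ.symm x)) i0 = _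
      rw [OrthonormalBasis.repr_apply_apply, hB0]
    have h1 : (Φfun x) i1 = (inner ℝ b' (ψ.symm x) : ℝ) := by
      show (B.repr (ψ.symm x)) i1 = _
      rw [OrthonormalBasis.repr_apply_apply, hB1]
    have hxa : inn x a = (inner ℝ a' (ψ.symm x) : ℝ) := by
      rw [ha', hinner, inn_comm]
    have hxw : inn x w = c * (inner ℝ a' (ψ.symm x) : ℝ)
        + c' * (inner ℝ b' (ψ.symm x) : ℝ) := by
      have hxw' : inn x w = (inner ℝ w' (ψ.symm x) : ℝ) := by
        rw [hw', hinner, inn_comm]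
      rw [hxw', hwdec, inner_add_left, real_inner_smul_left, real_inner_smul_left]
    simp only [Function.comp_apply, h0, h1, hxa, hxw]
  rw [hcomp, ← Measure.map_map (hφm.comp hpairm) hΦm]
  have hiso : Measure.map Φfun (gaussVec d r) = gaussVec d r := gaussVec_map_iso hr B.repr
  rw [hiso, ← Measure.map_map hφm hpairm]
  congr 1
  rw [gaussVec]
  exact map_pair_pi _ h01

end Aux

/-- Lemma 9(2): for `x ∼ N(0, r²·Id)`, `‖a‖₂ = 1`, `c = ⟨a,w⟩`, `c' = √(‖w‖₂² - c²)`,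
`E [1 - sgn(⟨x,a⟩)⟨x,w⟩]₊ = (1/(2π)) ∫_{ℝ²} [1 - cr|t₁| - c'rt₂]₊ e^{-(t₁²+t₂²)/2} dt₁ dt₂`. -/
theorem expectation_f_a_at_w (d : ℕ) (r : ℝ) (hr : 0 < r)
    (a : Fin d → ℝ) (ha : l2 a = 1) (w : Fin d → ℝ)
    (c c' : ℝ) (hc : c = inn a w) (hc' : c' = Real.sqrt ((l2 w) ^ 2 - c ^ 2)) :
    (∫ x, max (1 - Real.sign (inn x a) * inn x w) 0 ∂gaussVec d r)
      = (1 / (2 * π)) * ∫ p : ℝ × ℝ,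
          max (1 - c * r * |p.1| - c' * r * p.2) 0 * Real.exp (-(p.1 ^ 2 + p.2 ^ 2) / 2) := by
  have hkey : Measure.map (fun x : Fin d → ℝ => (inn x a, inn x w)) (gaussVec d r)
      = Measure.map (fun p : ℝ × ℝ => (p.1, c * p.1 + c' * p.2))
          ((gaussianReal 0 (Real.toNNReal (r ^ 2))).prod
            (gaussianReal 0 (Real.toNNReal (r ^ 2)))) := by
    rcases Nat.lt_or_ge d 2 with hd | hd
    · interval_cases d
      · exfalso
        norm_num [l2] at ha
      · exact key_map_one hr a w ha c c' hc hc'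
    · exact key_map hd hr a w ha c c' hc hc'
  have hinnm : ∀ u : Fin d → ℝ, Measurable fun x : Fin d → ℝ => inn x u := by
    intro u
    unfold inn
    exact Finset.measurable_sum _ fun j _ => (measurable_pi_apply j).mul_const _
  have hGm : Measurable fun q : ℝ × ℝ => max (1 - Real.sign q.1 * q.2) 0 :=
    (measurable_const.sub ((measurable_realSign.comp measurable_fst).mul measurable_snd)).max
      measurable_const
  have hstep : (∫ x, max (1 - Real.sign (inn x a) * inn x w) 0 ∂gaussVec d r)
      = ∫ q : ℝ × ℝ, max (1 - Real.sign q.1 * q.2) 0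
          ∂(Measure.map (fun x : Fin d → ℝ => (inn x a, inn x w)) (gaussVec d r)) := by
    rw [integral_map ((hinnm a).prodMk (hinnm w)).aemeasurable hGm.aestronglyMeasurable]
  rw [hstep, hkey]
  exact integral_chain hr c c'
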